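/- arXiv:1911.10434 — 2 statements merged into one kernel-verified Lean document; each statement's English description precedes it below -/
import Mathlib

section
/- (Lemma A.1, second bound.) In the smoothing spline truncation setting, with A = T(TᵀT)⁻²Tᵀ, λ_max(A) its largest eigenvalue, and ζ₂ = 2 λ_max(A) (ζ₁ B B̃ ‖Σ̃‖_F² + ‖c‖²), the coefficient vectors satisfy ‖d̃ − d‖² ≤ ζ₂ ‖Σ̃ − Σ‖_F². -/
open Matrix BigOperators

/-- Squared Frobenius norm of a real matrix. -/
noncomputable def frobSq {m n : ℕ} (M : Matrix (Fin m) (Fin n) ℝ) : ℝ :=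
  ∑ i, ∑ j, (M i j) ^ 2

/-- Squared Euclidean norm of a real vector. -/
noncomputable def vnormSq {m : ℕ} (v : Fin m → ℝ) : ℝ := ∑ i, (v i) ^ 2

lemma vnormSq_nonneg {m : ℕ} (v : Fin m → ℝ) : 0 ≤ vnormSq v :=
  Finset.sum_nonneg fun _ _ => sq_nonneg _

lemma frobSq_nonneg {m n : ℕ} (M : Matrix (Fin m) (Fin n) ℝ) : 0 ≤ frobSq M :=
  Finset.sum_nonneg fun _ _ => Finset.sum_nonneg fun _ _ => sq_nonneg _

lemma frobSq_transpose {m n : ℕ} (M : Matrix (Fin m) (Fin n) ℝ) : frobSq Mᵀ = frobSq M :=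
  Finset.sum_comm

lemma frobSq_sub_comm {m n : ℕ} (A B : Matrix (Fin m) (Fin n) ℝ) :
    frobSq (A - B) = frobSq (B - A) := by
  unfold frobSq
  congr 1; ext i; congr 1; ext j
  simp [Matrix.sub_apply]
  ring

lemma vnormSq_mulVec_le {m n : ℕ} (M : Matrix (Fin m) (Fin n) ℝ) (x : Fin n → ℝ) :
    vnormSq (M *ᵥ x) ≤ frobSq M * vnormSq x := by
  unfold vnormSq frobSq
  rw [Finset.sum_mul]
  apply Finset.sum_le_sum
  intro i _
  simpa [Matrix.mulVec, dotProduct] using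
    Finset.sum_mul_sq_le_sq_mul_sq Finset.univ (fun j => M i j) x

lemma frobSq_mul_le {m n k : ℕ} (A : Matrix (Fin m) (Fin n) ℝ) (B : Matrix (Fin n) (Fin k) ℝ) :
    frobSq (A * B) ≤ frobSq A * frobSq B := by
  unfold frobSq
  rw [Finset.sum_mul]
  apply Finset.sum_le_sum
  intro i _
  calc ∑ j, ((A * B) i j) ^ 2 ≤ ∑ j, (∑ l, (A i l) ^ 2) * (∑ l, (B l j) ^ 2) := by
        apply Finset.sum_le_sum
        intro j _
        simpa [Matrix.mul_apply] using
          Finset.sum_mul_sq_le_sq_mul_sq Finset.univ (fun l => A i l) (fun l => B l j)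
    _ = (∑ l, (A i l) ^ 2) * ∑ j, ∑ l, (B l j) ^ 2 := by rw [← Finset.mul_sum]
    _ = (∑ l, (A i l) ^ 2) * ∑ l, ∑ j, (B l j) ^ 2 := by rw [Finset.sum_comm]

lemma vnormSq_add_le {m : ℕ} (x y : Fin m → ℝ) :
    vnormSq (x + y) ≤ 2 * vnormSq x + 2 * vnormSq y := by
  unfold vnormSq
  have : ∀ i ∈ Finset.univ, ((x + y) i) ^ 2 ≤ 2 * (x i) ^ 2 + 2 * (y i) ^ 2 := by
    intro i _
    have := sq_nonneg (x i - y i)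
    simp only [Pi.add_apply]
    nlinarith
  calc ∑ i, ((x + y) i) ^ 2 ≤ ∑ i, (2 * (x i) ^ 2 + 2 * (y i) ^ 2) := Finset.sum_le_sum this
    _ = 2 * ∑ i, (x i) ^ 2 + 2 * ∑ i, (y i) ^ 2 := by
        rw [Finset.sum_add_distrib, Finset.mul_sum, Finset.mul_sum]

lemma exists_spectral_repr {m : ℕ} {H : Matrix (Fin m) (Fin m) ℝ} (hH : H.IsHermitian)
    (u : Fin m → ℝ) :
    ∃ v : Fin m → ℝ,
      vnormSq v = vnormSq u ∧
      u ⬝ᵥ (H *ᵥ u) = ∑ k, hH.eigenvalues k * (v k) ^ 2 ∧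
      ∀ a : ℝ, vnormSq (H *ᵥ u + a • u) = ∑ k, ((hH.eigenvalues k + a) * v k) ^ 2 := by
  set Um : Matrix (Fin m) (Fin m) ℝ := (hH.eigenvectorUnitary : Matrix (Fin m) (Fin m) ℝ) with hUm
  have h1 : Um * Umᵀ = 1 := by
    have := Matrix.mem_unitaryGroup_iff.mp hH.eigenvectorUnitary.2
    rwa [Matrix.star_eq_conjTranspose, Matrix.conjTranspose_eq_transpose_of_trivial] at this
  have h2 : Umᵀ * Um = 1 := by
    have := Matrix.mem_unitaryGroup_iff'.mp hH.eigenvectorUnitary.2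
    rwa [Matrix.star_eq_conjTranspose, Matrix.conjTranspose_eq_transpose_of_trivial] at this
  have hspec : H = Um * Matrix.diagonal hH.eigenvalues * Umᵀ := by
    have := hH.spectral_theorem
    rwa [Unitary.conjStarAlgAut_apply, Matrix.star_eq_conjTranspose, Matrix.conjTranspose_eq_transpose_of_trivial,
      RCLike.ofReal_real_eq_id, Function.id_comp] at this
  set v : Fin m → ℝ := Umᵀ *ᵥ u with hv
  have hUv : Um *ᵥ v = u := by
    rw [hv, Matrix.mulVec_mulVec, h1, Matrix.one_mulVec]
  have key : ∀ w : Fin m → ℝ, vnormSq (Um *ᵥ w) = vnormSq w := by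
    intro w
    have e1 : (Um *ᵥ w) ⬝ᵥ (Um *ᵥ w) = w ⬝ᵥ w := by
      rw [Matrix.dotProduct_mulVec, ← Matrix.mulVec_transpose, Matrix.mulVec_mulVec, h2,
        Matrix.one_mulVec]
    unfold vnormSq
    simpa [dotProduct, sq] using e1
  have hrep : ∀ a : ℝ, H *ᵥ u + a • u = Um *ᵥ (fun k => (hH.eigenvalues k + a) * v k) := by
    intro a
    have hx : (fun k => (hH.eigenvalues k + a) * v k)
        = Matrix.diagonal hH.eigenvalues *ᵥ v + a • v := by
      funext k
      simp only [Pi.add_apply, Pi.smul_apply, Matrix.mulVec_diagonal, smul_eq_mul]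
      ring
    rw [hx, Matrix.mulVec_add, Matrix.mulVec_smul, hUv, Matrix.mulVec_mulVec, hv,
      Matrix.mulVec_mulVec, ← hspec]
  refine ⟨v, ?_, ?_, ?_⟩
  · rw [← hUv, key]
  · have := hrep 0
    simp only [zero_smul, add_zero] at this
    rw [this, Matrix.dotProduct_mulVec, ← Matrix.mulVec_transpose, ← hv]
    unfold dotProduct
    congr 1; funext k; ring
  · intro a
    rw [hrep a, key]
    rfl

lemma rayleigh_le {m : ℕ} [NeZero m] {H : Matrix (Fin m) (Fin m) ℝ} (hH : H.IsHermitian)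
    (w : Fin m → ℝ) :
    w ⬝ᵥ (H *ᵥ w) ≤ (⨆ i, hH.eigenvalues i) * vnormSq w := by
  obtain ⟨v, hv1, hv2, _⟩ := exists_spectral_repr hH w
  rw [hv2, ← hv1]
  unfold vnormSq
  rw [Finset.mul_sum]
  apply Finset.sum_le_sum
  intro k _
  exact mul_le_mul_of_nonneg_right (le_ciSup (Set.Finite.bddAbove (Set.finite_range _)) k)
    (sq_nonneg _)

lemma posdef_shift_bound {m : ℕ} {N : Matrix (Fin m) (Fin m) ℝ} (hN : N.PosDef) {a : ℝ}
    (ha : 0 < a) (u w : Fin m → ℝ) (h : N *ᵥ u + a • u = w) :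
    vnormSq u ≤ (∑ k, ((hN.1.eigenvalues k) ^ 2)⁻¹) * vnormSq w := by
  obtain ⟨v, hv1, _, hv3⟩ := exists_spectral_repr hN.1 u
  have hw := hv3 a
  rw [h] at hw
  rw [← hv1, hw]
  unfold vnormSq
  calc ∑ k, (v k) ^ 2 ≤ ∑ k, ((hN.1.eigenvalues k) ^ 2)⁻¹ * ((hN.1.eigenvalues k + a) * v k) ^ 2 := by
        apply Finset.sum_le_sum
        intro k _
        have hk := hN.eigenvalues_pos k
        rw [mul_pow, ← mul_assoc]
        have h1 : (1:ℝ) ≤ ((hN.1.eigenvalues k) ^ 2)⁻¹ * (hN.1.eigenvalues k + a) ^ 2 := by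
          rw [inv_mul_eq_div, le_div_iff₀ (by positivity)]
          nlinarith
        nlinarith [sq_nonneg (v k)]
    _ ≤ ∑ k, ((hN.1.eigenvalues k) ^ 2)⁻¹ * (∑ j, ((hN.1.eigenvalues j + a) * v j) ^ 2) := by
        apply Finset.sum_le_sum
        intro k _
        apply mul_le_mul_of_nonneg_left _ (by positivity)
        exact Finset.single_le_sum (f := fun j => ((hN.1.eigenvalues j + a) * v j) ^ 2)
          (fun j _ => sq_nonneg _) (Finset.mem_univ k)
    _ = (∑ k, ((hN.1.eigenvalues k) ^ 2)⁻¹) * ∑ j, ((hN.1.eigenvalues j + a) * v j) ^ 2 := by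
        rw [Finset.sum_mul]

lemma cpart {n q : ℕ} (Q₂ : Matrix (Fin n) (Fin q) ℝ) (S St : Matrix (Fin n) (Fin n) ℝ)
    (hpd : (Q₂ᵀ * S * Q₂).PosDef) (hpdt : (Q₂ᵀ * St * Q₂).PosDef) {a : ℝ} (ha : 0 < a)
    (y c ct : Fin n → ℝ)
    (hc : Q₂ *ᵥ (Q₂ᵀ *ᵥ c) = c) (hct : Q₂ *ᵥ (Q₂ᵀ *ᵥ ct) = ct)
    (hMz : (Q₂ᵀ * S * Q₂) *ᵥ (Q₂ᵀ *ᵥ c) + a • (Q₂ᵀ *ᵥ c) = Q₂ᵀ *ᵥ y)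
    (hMzt : (Q₂ᵀ * St * Q₂) *ᵥ (Q₂ᵀ *ᵥ ct) + a • (Q₂ᵀ *ᵥ ct) = Q₂ᵀ *ᵥ y) :
    vnormSq (c - ct) ≤
      ((frobSq Q₂) ^ 3 * vnormSq (Q₂ᵀ *ᵥ y)) * (∑ k, ((hpd.1.eigenvalues k) ^ 2)⁻¹) *
        (∑ k, ((hpdt.1.eigenvalues k) ^ 2)⁻¹) * frobSq (St - S) := by
  set N := Q₂ᵀ * S * Q₂ with hN
  set Nt := Q₂ᵀ * St * Q₂ with hNt
  set z := Q₂ᵀ *ᵥ c with hz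
  set zt := Q₂ᵀ *ᵥ ct with hzt
  set Bc := ∑ k, ((hpd.1.eigenvalues k) ^ 2)⁻¹ with hBc
  set Bt := ∑ k, ((hpdt.1.eigenvalues k) ^ 2)⁻¹ with hBt
  have hBc0 : 0 ≤ Bc := Finset.sum_nonneg fun k _ => inv_nonneg.mpr (sq_nonneg _)
  have hBt0 : 0 ≤ Bt := Finset.sum_nonneg fun k _ => inv_nonneg.mpr (sq_nonneg _)
  have hdiff : N *ᵥ (z - zt) + a • (z - zt) = (Nt - N) *ᵥ zt := by
    have h3 : N *ᵥ z + a • z = Nt *ᵥ zt + a • zt := by rw [hMz, hMzt]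
    calc N *ᵥ (z - zt) + a • (z - zt)
        = (N *ᵥ z + a • z) - (N *ᵥ zt + a • zt) := by rw [Matrix.mulVec_sub]; module
      _ = (Nt *ᵥ zt + a • zt) - (N *ᵥ zt + a • zt) := by rw [h3]
      _ = Nt *ᵥ zt - N *ᵥ zt := by module
      _ = (Nt - N) *ᵥ zt := by rw [Matrix.sub_mulVec]
  have b1 := posdef_shift_bound hpd ha (z - zt) _ hdiff
  have b2 := posdef_shift_bound hpdt ha zt _ hMzt
  have hNtN : Nt - N = Q₂ᵀ * (St - S) * Q₂ := by
    rw [hNt, hN, Matrix.mul_sub, Matrix.sub_mul]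
  have b3 : frobSq (Nt - N) ≤ frobSq Q₂ ^ 2 * frobSq (St - S) := by
    rw [hNtN]
    calc frobSq (Q₂ᵀ * (St - S) * Q₂) ≤ frobSq (Q₂ᵀ * (St - S)) * frobSq Q₂ := frobSq_mul_le _ _
      _ ≤ (frobSq Q₂ᵀ * frobSq (St - S)) * frobSq Q₂ :=
          mul_le_mul_of_nonneg_right (frobSq_mul_le _ _) (frobSq_nonneg _)
      _ = frobSq Q₂ ^ 2 * frobSq (St - S) := by rw [frobSq_transpose]; ring
  have b4 : vnormSq ((Nt - N) *ᵥ zt) ≤ (frobSq Q₂ ^ 2 * frobSq (St - S)) * vnormSq zt :=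
    le_trans (vnormSq_mulVec_le _ _) (mul_le_mul_of_nonneg_right b3 (vnormSq_nonneg _))
  have b5 : vnormSq (c - ct) ≤ frobSq Q₂ * vnormSq (z - zt) := by
    have hQzz : Q₂ *ᵥ (z - zt) = c - ct := by rw [Matrix.mulVec_sub, hc, hct]
    rw [← hQzz]; exact vnormSq_mulVec_le _ _
  have hsq0 : (0:ℝ) ≤ frobSq Q₂ ^ 2 * frobSq (St - S) :=
    mul_nonneg (pow_nonneg (frobSq_nonneg _) 2) (frobSq_nonneg _)
  calc vnormSq (c - ct) ≤ frobSq Q₂ * vnormSq (z - zt) := b5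
    _ ≤ frobSq Q₂ * (Bc * vnormSq ((Nt - N) *ᵥ zt)) :=
        mul_le_mul_of_nonneg_left b1 (frobSq_nonneg _)
    _ ≤ frobSq Q₂ * (Bc * ((frobSq Q₂ ^ 2 * frobSq (St - S)) * vnormSq zt)) :=
        mul_le_mul_of_nonneg_left (mul_le_mul_of_nonneg_left b4 hBc0) (frobSq_nonneg _)
    _ ≤ frobSq Q₂ * (Bc * ((frobSq Q₂ ^ 2 * frobSq (St - S)) * (Bt * vnormSq (Q₂ᵀ *ᵥ y)))) := by
        apply mul_le_mul_of_nonneg_left _ (frobSq_nonneg _)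
        apply mul_le_mul_of_nonneg_left _ hBc0
        exact mul_le_mul_of_nonneg_left b2 hsq0
    _ = ((frobSq Q₂) ^ 3 * vnormSq (Q₂ᵀ *ᵥ y)) * Bc * Bt * frobSq (St - S) := by ring

/-- Lemma A.1, second bound: in the smoothing spline truncation setting, with
`A = T(TᵀT)⁻²Tᵀ`, `λ_max(A)` its largest eigenvalue, and
`ζ₂ = 2 λ_max(A) (ζ₁ B B̃ ‖Σ̃‖_F² + ‖c‖²)`, one has `‖d̃ − d‖² ≤ ζ₂ ‖Σ̃ − Σ‖_F²`. -/
theorem stmt6 (n p : ℕ) (hp : 1 ≤ p) (hpn : p < n)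
    (y : Fin n → ℝ) (lam : ℝ) (hlam : 0 < lam)
    (T Q₁ : Matrix (Fin n) (Fin p) ℝ) (Q₂ : Matrix (Fin n) (Fin (n - p)) ℝ)
    (R : Matrix (Fin p) (Fin p) ℝ)
    (hQ₁ : Q₁ᵀ * Q₁ = 1) (hQ₂ : Q₂ᵀ * Q₂ = 1) (hQ₁₂ : Q₁ᵀ * Q₂ = 0)
    (hQ : Q₁ * Q₁ᵀ + Q₂ * Q₂ᵀ = 1)
    (hR : IsUnit R) (hRtri : R.BlockTriangular id) (hT : T = Q₁ * R)
    (K : ℕ) (hK : 1 ≤ K) (κ : ℝ) (hκ : 0 < κ)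
    (δ : ℕ → ℝ) (hδ0 : ∀ k, 0 ≤ δ k) (hδmono : ∀ k, δ (k + 1) ≤ δ k) (hδsum : Summable δ)
    (U : Fin n → ℕ → ℝ) (hU : ∀ i k, |U i k| ≤ κ)
    (S St : Matrix (Fin n) (Fin n) ℝ)
    (hS : ∀ i j, S i j = ∑' k, δ k * U i k * U j k)
    (hSt : ∀ i j, St i j = ∑ k ∈ Finset.range K, δ k * U i k * U j k)
    (hSpsd : S.PosSemidef) (hStpsd : St.PosSemidef)
    (hpd : (Q₂ᵀ * S * Q₂).PosDef) (hpdt : (Q₂ᵀ * St * Q₂).PosDef)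
    (hA : (T * ((Tᵀ * T)⁻¹ * (Tᵀ * T)⁻¹) * Tᵀ).IsHermitian)
    (c : Fin n → ℝ) (d : Fin p → ℝ)
    (hcd : T *ᵥ d + (S + ((n : ℝ) * lam) • 1) *ᵥ c = y) (hc0 : Tᵀ *ᵥ c = 0)
    (ct : Fin n → ℝ) (dt : Fin p → ℝ)
    (hcdt : T *ᵥ dt + (St + ((n : ℝ) * lam) • 1) *ᵥ ct = y) (hct0 : Tᵀ *ᵥ ct = 0) :
    vnormSq (dt - d) ≤
      (2 * (⨆ i, hA.eigenvalues i) *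
        (((frobSq Q₂) ^ 3 * vnormSq (Q₂ᵀ *ᵥ y)) *
          (∑ k, ((hpd.1.eigenvalues k) ^ 2)⁻¹) *
          (∑ k, ((hpdt.1.eigenvalues k) ^ 2)⁻¹) *
          frobSq St + vnormSq c)) * frobSq (St - S) := by
  have hn : 0 < n := by omega
  haveI : NeZero n := ⟨hn.ne'⟩
  set a : ℝ := (n : ℝ) * lam with haa
  have ha : 0 < a := mul_pos (by exact_mod_cast hn) hlam
  have hSplit : ∀ (M : Matrix (Fin n) (Fin n) ℝ) (x : Fin n → ℝ),
      (M + a • 1) *ᵥ x = M *ᵥ x + a • x := by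
    intro M x
    rw [Matrix.add_mulVec, Matrix.smul_mulVec, Matrix.one_mulVec]
  -- Q₂ᵀ T = 0
  have hQ₂₁ : Q₂ᵀ * Q₁ = 0 := by
    have := congrArg Matrix.transpose hQ₁₂
    rwa [Matrix.transpose_mul, Matrix.transpose_zero, Matrix.transpose_transpose] at this
  have hQ₂T : Q₂ᵀ * T = 0 := by
    rw [hT, ← Matrix.mul_assoc, hQ₂₁, Matrix.zero_mul]
  have hRdet : IsUnit R.det := (Matrix.isUnit_iff_isUnit_det R).mp hR
  have hRT1 : (Rᵀ)⁻¹ * Rᵀ = 1 :=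
    Matrix.nonsing_inv_mul _ (by rwa [Matrix.det_transpose])
  -- Q₁ᵀ c = 0  and Q₂ Q₂ᵀ c = c
  have hQ₁v : ∀ v : Fin n → ℝ, Tᵀ *ᵥ v = 0 → Q₁ᵀ *ᵥ v = 0 := by
    intro v hv
    have h0 : Rᵀ *ᵥ (Q₁ᵀ *ᵥ v) = 0 := by
      rw [Matrix.mulVec_mulVec, ← Matrix.transpose_mul, ← hT, hv]
    calc Q₁ᵀ *ᵥ v = ((Rᵀ)⁻¹ * Rᵀ) *ᵥ (Q₁ᵀ *ᵥ v) := by rw [hRT1, Matrix.one_mulVec]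
      _ = (Rᵀ)⁻¹ *ᵥ (Rᵀ *ᵥ (Q₁ᵀ *ᵥ v)) := by rw [← Matrix.mulVec_mulVec]
      _ = 0 := by rw [h0, Matrix.mulVec_zero]
  have hQv : ∀ v : Fin n → ℝ, Tᵀ *ᵥ v = 0 → Q₂ *ᵥ (Q₂ᵀ *ᵥ v) = v := by
    intro v hv
    have h' : Q₂ * Q₂ᵀ = 1 - Q₁ * Q₁ᵀ := eq_sub_of_add_eq' hQ
    rw [Matrix.mulVec_mulVec, h', Matrix.sub_mulVec, Matrix.one_mulVec,
      ← Matrix.mulVec_mulVec, hQ₁v v hv, Matrix.mulVec_zero, sub_zero]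
  have hcQ : Q₂ *ᵥ (Q₂ᵀ *ᵥ c) = c := hQv c hc0
  have hctQ : Q₂ *ᵥ (Q₂ᵀ *ᵥ ct) = ct := hQv ct hct0
  -- reduced systems
  have hMz : (Q₂ᵀ * S * Q₂) *ᵥ (Q₂ᵀ *ᵥ c) + a • (Q₂ᵀ *ᵥ c) = Q₂ᵀ *ᵥ y := by
    have e1 : Q₂ᵀ *ᵥ (T *ᵥ d + (S + a • 1) *ᵥ c) = Q₂ᵀ *ᵥ y := by rw [hcd]
    rw [Matrix.mulVec_add, Matrix.mulVec_mulVec, hQ₂T, Matrix.zero_mulVec, zero_add,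
      hSplit, Matrix.mulVec_add, Matrix.mulVec_smul] at e1
    calc (Q₂ᵀ * S * Q₂) *ᵥ (Q₂ᵀ *ᵥ c) + a • (Q₂ᵀ *ᵥ c)
        = Q₂ᵀ *ᵥ (S *ᵥ c) + a • (Q₂ᵀ *ᵥ c) := by
          rw [← Matrix.mulVec_mulVec, hcQ, Matrix.mulVec_mulVec]
      _ = Q₂ᵀ *ᵥ y := e1
  have hMzt : (Q₂ᵀ * St * Q₂) *ᵥ (Q₂ᵀ *ᵥ ct) + a • (Q₂ᵀ *ᵥ ct) = Q₂ᵀ *ᵥ y := by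
    have e1 : Q₂ᵀ *ᵥ (T *ᵥ dt + (St + a • 1) *ᵥ ct) = Q₂ᵀ *ᵥ y := by rw [hcdt]
    rw [Matrix.mulVec_add, Matrix.mulVec_mulVec, hQ₂T, Matrix.zero_mulVec, zero_add,
      hSplit, Matrix.mulVec_add, Matrix.mulVec_smul] at e1
    calc (Q₂ᵀ * St * Q₂) *ᵥ (Q₂ᵀ *ᵥ ct) + a • (Q₂ᵀ *ᵥ ct)
        = Q₂ᵀ *ᵥ (St *ᵥ ct) + a • (Q₂ᵀ *ᵥ ct) := by
          rw [← Matrix.mulVec_mulVec, hctQ, Matrix.mulVec_mulVec]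
      _ = Q₂ᵀ *ᵥ y := e1
  have key_c := cpart Q₂ S St hpd hpdt ha y c ct hcQ hctQ hMz hMzt
  -- d-part
  have hTT : Tᵀ * T = Rᵀ * R := by
    rw [hT, Matrix.transpose_mul, Matrix.mul_assoc, ← Matrix.mul_assoc Q₁ᵀ, hQ₁, Matrix.one_mul]
  have hTTdet : IsUnit (Tᵀ * T).det := by
    rw [hTT, Matrix.det_mul, Matrix.det_transpose]
    exact hRdet.mul hRdet
  set P : Matrix (Fin p) (Fin n) ℝ := (Tᵀ * T)⁻¹ * Tᵀ with hP
  have hPT : P * T = 1 := by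
    rw [hP, Matrix.mul_assoc, Matrix.nonsing_inv_mul _ hTTdet]
  have hPv : ∀ v : Fin n → ℝ, Tᵀ *ᵥ v = 0 → P *ᵥ v = 0 := by
    intro v hv
    rw [hP, ← Matrix.mulVec_mulVec, hv, Matrix.mulVec_zero]
  have hd : d = P *ᵥ y - P *ᵥ (S *ᵥ c) := by
    have h1 : P *ᵥ (T *ᵥ d + (S + a • 1) *ᵥ c) = P *ᵥ y := by rw [hcd]
    rw [Matrix.mulVec_add, Matrix.mulVec_mulVec, hPT, Matrix.one_mulVec, hSplit,
      Matrix.mulVec_add, Matrix.mulVec_smul, hPv c hc0, smul_zero, add_zero] at h1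
    exact eq_sub_of_add_eq h1
  have hdt : dt = P *ᵥ y - P *ᵥ (St *ᵥ ct) := by
    have h1 : P *ᵥ (T *ᵥ dt + (St + a • 1) *ᵥ ct) = P *ᵥ y := by rw [hcdt]
    rw [Matrix.mulVec_add, Matrix.mulVec_mulVec, hPT, Matrix.one_mulVec, hSplit,
      Matrix.mulVec_add, Matrix.mulVec_smul, hPv ct hct0, smul_zero, add_zero] at h1
    exact eq_sub_of_add_eq h1
  set w : Fin n → ℝ := S *ᵥ c - St *ᵥ ct with hwdef
  have hw : dt - d = P *ᵥ w := by
    rw [hd, hdt, hwdef, Matrix.mulVec_sub]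
    module
  set A : Matrix (Fin n) (Fin n) ℝ := T * ((Tᵀ * T)⁻¹ * (Tᵀ * T)⁻¹) * Tᵀ with hAdef
  have hPtP : Pᵀ * P = A := by
    rw [hP, hAdef]
    simp only [Matrix.transpose_mul, Matrix.transpose_transpose, Matrix.transpose_nonsing_inv,
      Matrix.mul_assoc]
  have hquad : ∀ v : Fin n → ℝ, vnormSq (P *ᵥ v) = v ⬝ᵥ (A *ᵥ v) := by
    intro v
    have e1 : vnormSq (P *ᵥ v) = (P *ᵥ v) ⬝ᵥ (P *ᵥ v) := by
      unfold vnormSq dotProduct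
      congr 1; funext i; ring
    rw [e1, Matrix.dotProduct_mulVec, ← Matrix.mulVec_transpose, Matrix.mulVec_mulVec, hPtP,
      dotProduct_comm]
  set lmax : ℝ := ⨆ i, hA.eigenvalues i with hlmax
  have hray : ∀ v : Fin n → ℝ, vnormSq (P *ᵥ v) ≤ lmax * vnormSq v := by
    intro v
    rw [hquad v]
    exact rayleigh_le hA v
  have hl0 : 0 ≤ lmax := by
    have h1 : (0:ℝ) ≤ vnormSq (P *ᵥ Pi.single (⟨0, hn⟩ : Fin n) 1) := vnormSq_nonneg _
    have h2 := hray (Pi.single (⟨0, hn⟩ : Fin n) 1)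
    have h3 : vnormSq (Pi.single (⟨0, hn⟩ : Fin n) (1:ℝ)) = 1 := by
      unfold vnormSq
      rw [Finset.sum_eq_single (⟨0, hn⟩ : Fin n)]
      · simp
      · intro b _ hb; rw [Pi.single_eq_of_ne hb]; simp
      · intro h; exact absurd (Finset.mem_univ _) h
    rw [h3, mul_one] at h2
    linarith
  have hwsplit : w = (S - St) *ᵥ c + St *ᵥ (c - ct) := by
    rw [hwdef, Matrix.sub_mulVec, Matrix.mulVec_sub]
    module
  have hvw : vnormSq w ≤ 2 * (frobSq (St - S) * vnormSq c) +
      2 * (frobSq St * vnormSq (c - ct)) := by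
    rw [hwsplit]
    have h1 := vnormSq_add_le ((S - St) *ᵥ c) (St *ᵥ (c - ct))
    have h2 : vnormSq ((S - St) *ᵥ c) ≤ frobSq (St - S) * vnormSq c := by
      rw [← frobSq_sub_comm]
      exact vnormSq_mulVec_le _ _
    have h3 := vnormSq_mulVec_le St (c - ct)
    linarith
  set Z : ℝ := ((frobSq Q₂) ^ 3 * vnormSq (Q₂ᵀ *ᵥ y)) * (∑ k, ((hpd.1.eigenvalues k) ^ 2)⁻¹) *
    (∑ k, ((hpdt.1.eigenvalues k) ^ 2)⁻¹) with hZ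
  have hfin : vnormSq w ≤ 2 * (frobSq (St - S) * vnormSq c) +
      2 * (frobSq St * (Z * frobSq (St - S))) := by
    have := mul_le_mul_of_nonneg_left key_c (frobSq_nonneg St)
    linarith [hvw]
  calc vnormSq (dt - d) = vnormSq (P *ᵥ w) := by rw [hw]
    _ ≤ lmax * vnormSq w := hray w
    _ ≤ lmax * (2 * (frobSq (St - S) * vnormSq c) +
        2 * (frobSq St * (Z * frobSq (St - S)))) := mul_le_mul_of_nonneg_left hfin hl0
    _ = (2 * lmax * (Z * frobSq St + vnormSq c)) * frobSq (St - S) := by ring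
end

section
/- Let n, p, K ≥ 1, y ∈ ℝⁿ, λ > 0, T an n×p real matrix, and Z an n×K real matrix, and set Σ̃ = ZZᵀ. Then: (i) for every c ∈ ℝⁿ and d ∈ ℝᵖ, setting b = Zᵀc gives ‖y − Td − Σ̃c‖² + nλ cᵀΣ̃c = ‖y − Td − Zb‖² + nλ‖b‖²; and (ii) the infimum over (c, d) ∈ ℝⁿ × ℝᵖ of ‖y − Td − Σ̃c‖² + nλ cᵀΣ̃c equals the infimum over (b, d) ∈ ℝᴷ × ℝᵖ of ‖y − Td − Zb‖² + nλ‖b‖². -/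
open Matrix BigOperators

lemma vnormSq_eq_dot {m : ℕ} (v : Fin m → ℝ) : vnormSq v = v ⬝ᵥ v := by
  simp [vnormSq, dotProduct, sq]

lemma exists_proj {n K : ℕ} (Z : Matrix (Fin n) (Fin K) ℝ) (b : Fin K → ℝ) :
    ∃ c : Fin n → ℝ, Z *ᵥ (Zᵀ *ᵥ c) = Z *ᵥ b ∧
      vnormSq (Zᵀ *ᵥ c) ≤ vnormSq b := by
  simp only [vnormSq]
  let E := EuclideanSpace ℝ (Fin K)
  let f : (Fin n → ℝ) →ₗ[ℝ] E := (WithLp.linearEquiv 2 ℝ (Fin K → ℝ)).symm.toLinearMap ∘ₗ Matrix.mulVecLin Zᵀ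
  let S : Submodule ℝ E := LinearMap.range f
  have : CompleteSpace S := FiniteDimensional.complete ℝ S
  let b' : E := WithLp.toLp 2 b
  set bp : E := (S.orthogonalProjectionOnto b' : E) with hbp
  obtain ⟨c, hc⟩ : bp ∈ S := (S.orthogonalProjectionOnto b').2
  have hmem : b' - bp ∈ Sᗮ := S.sub_starProjection_mem_orthogonal b'
  have hZcbp : Zᵀ *ᵥ c = (bp : Fin K → ℝ) := by rw [← hc]; rfl
  refine ⟨c, ?_, ?_⟩
  · funext i
    have h0 : (inner ℝ (f (Pi.single i 1)) (b' - bp) : ℝ) = 0 :=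
      (Submodule.mem_orthogonal S _).1 hmem _ (LinearMap.mem_range_self f _)
    have hinner : (inner ℝ (f (Pi.single i 1)) (b' - bp) : ℝ)
        = ∑ j, Z i j * (b j - (bp : Fin K → ℝ) j) := by
      rw [PiLp.inner_apply]
      refine Finset.sum_congr rfl fun j _ => ?_
      have : f (Pi.single i 1) j = Z i j := by
        show (Zᵀ *ᵥ Pi.single i 1) j = Z i j
        simp [mulVec, dotProduct, Pi.single_apply]
      rw [this, Real.inner_apply]
      rfl
    have hsum : ∑ j, Z i j * (b j - (bp : Fin K → ℝ) j) = 0 := hinner ▸ h0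
    have : (Z *ᵥ b) i - (Z *ᵥ (bp : Fin K → ℝ)) i = 0 := by
      simpa [mulVec, dotProduct, mul_sub, Finset.sum_sub_distrib] using hsum
    rw [hZcbp]
    linarith
  · have hn : ‖bp‖ ≤ ‖b'‖ := by
      calc ‖bp‖ ≤ ‖S.orthogonalProjectionOnto‖ * ‖b'‖ := by
            exact S.orthogonalProjectionOnto.le_opNorm b'
        _ ≤ 1 * ‖b'‖ :=
            mul_le_mul_of_nonneg_right (Submodule.orthogonalProjectionOnto_norm_le S) (norm_nonneg _)
        _ = ‖b'‖ := one_mul _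
    have hsq : ‖bp‖^2 ≤ ‖b'‖^2 := pow_le_pow_left₀ (norm_nonneg _) hn 2
    have e1 : ‖bp‖^2 = ∑ i, ((Zᵀ *ᵥ c) i)^2 := by
      rw [EuclideanSpace.norm_eq, Real.sq_sqrt (by positivity), hZcbp]
      simp [Real.norm_eq_abs, sq_abs]
    have e2 : ‖b'‖^2 = ∑ i, (b i)^2 := by
      rw [EuclideanSpace.norm_eq, Real.sq_sqrt (by positivity)]
      simp [b', Real.norm_eq_abs, sq_abs]
    rw [← e1, ← e2]; exact hsq

/-- with `Σ̃ = ZZᵀ`, (i) for every `c, d`, setting `b = Zᵀc` gives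
`‖y − Td − Σ̃c‖² + nλ cᵀΣ̃c = ‖y − Td − Zb‖² + nλ‖b‖²`; and (ii) the infimum over `(c, d)` of
`‖y − Td − Σ̃c‖² + nλ cᵀΣ̃c` equals the infimum over `(b, d)` of `‖y − Td − Zb‖² + nλ‖b‖²`. -/
theorem stmt13 (n p K : ℕ) (hn : 1 ≤ n) (hp : 1 ≤ p) (hK : 1 ≤ K)
    (y : Fin n → ℝ) (lam : ℝ) (hlam : 0 < lam)
    (T : Matrix (Fin n) (Fin p) ℝ) (Z : Matrix (Fin n) (Fin K) ℝ) :
    (∀ (c : Fin n → ℝ) (d : Fin p → ℝ),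
      vnormSq (y - T *ᵥ d - (Z * Zᵀ) *ᵥ c) + (n : ℝ) * lam * (c ⬝ᵥ ((Z * Zᵀ) *ᵥ c)) =
      vnormSq (y - T *ᵥ d - Z *ᵥ (Zᵀ *ᵥ c)) + (n : ℝ) * lam * vnormSq (Zᵀ *ᵥ c)) ∧
    (⨅ cd : (Fin n → ℝ) × (Fin p → ℝ),
        vnormSq (y - T *ᵥ cd.2 - (Z * Zᵀ) *ᵥ cd.1) +
          (n : ℝ) * lam * (cd.1 ⬝ᵥ ((Z * Zᵀ) *ᵥ cd.1))) =
    (⨅ bd : (Fin K → ℝ) × (Fin p → ℝ),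
        vnormSq (y - T *ᵥ bd.2 - Z *ᵥ bd.1) + (n : ℝ) * lam * vnormSq bd.1) := by
  have h1 : ∀ c : Fin n → ℝ, (Z * Zᵀ) *ᵥ c = Z *ᵥ (Zᵀ *ᵥ c) := fun c => by
    rw [← Matrix.mulVec_mulVec]
  have h2 : ∀ c : Fin n → ℝ, c ⬝ᵥ ((Z * Zᵀ) *ᵥ c) = vnormSq (Zᵀ *ᵥ c) := fun c => by
    rw [h1, Matrix.dotProduct_mulVec, vnormSq_eq_dot]
    congr 1
    ext j
    simp [vecMul, mulVec, dotProduct, mul_comm]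
  have part1 : ∀ (c : Fin n → ℝ) (d : Fin p → ℝ),
      vnormSq (y - T *ᵥ d - (Z * Zᵀ) *ᵥ c) + (n : ℝ) * lam * (c ⬝ᵥ ((Z * Zᵀ) *ᵥ c)) =
      vnormSq (y - T *ᵥ d - Z *ᵥ (Zᵀ *ᵥ c)) + (n : ℝ) * lam * vnormSq (Zᵀ *ᵥ c) := by
    intro c d
    rw [h2, h1]
  refine ⟨part1, ?_⟩
  have hnl : (0:ℝ) ≤ (n : ℝ) * lam := by positivity
  have hb1 : BddBelow (Set.range fun cd : (Fin n → ℝ) × (Fin p → ℝ) =>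
      vnormSq (y - T *ᵥ cd.2 - (Z * Zᵀ) *ᵥ cd.1) +
        (n : ℝ) * lam * (cd.1 ⬝ᵥ ((Z * Zᵀ) *ᵥ cd.1))) := by
    refine ⟨0, ?_⟩
    rintro x ⟨cd, rfl⟩
    dsimp only
    rw [part1 cd.1 cd.2]
    have := vnormSq_nonneg (y - T *ᵥ cd.2 - Z *ᵥ (Zᵀ *ᵥ cd.1))
    have := vnormSq_nonneg (Zᵀ *ᵥ cd.1)
    nlinarith
  have hb2 : BddBelow (Set.range fun bd : (Fin K → ℝ) × (Fin p → ℝ) =>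
      vnormSq (y - T *ᵥ bd.2 - Z *ᵥ bd.1) + (n : ℝ) * lam * vnormSq bd.1) := by
    refine ⟨0, ?_⟩
    rintro x ⟨bd, rfl⟩
    dsimp only
    have := vnormSq_nonneg (y - T *ᵥ bd.2 - Z *ᵥ bd.1)
    have := vnormSq_nonneg bd.1
    nlinarith
  apply le_antisymm
  · refine le_ciInf fun bd => ?_
    obtain ⟨c, hZ, hle⟩ := exists_proj Z bd.1
    calc (⨅ cd : (Fin n → ℝ) × (Fin p → ℝ),
          vnormSq (y - T *ᵥ cd.2 - (Z * Zᵀ) *ᵥ cd.1) +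
            (n : ℝ) * lam * (cd.1 ⬝ᵥ ((Z * Zᵀ) *ᵥ cd.1)))
        ≤ vnormSq (y - T *ᵥ bd.2 - (Z * Zᵀ) *ᵥ c) +
            (n : ℝ) * lam * (c ⬝ᵥ ((Z * Zᵀ) *ᵥ c)) := ciInf_le hb1 (c, bd.2)
      _ = vnormSq (y - T *ᵥ bd.2 - Z *ᵥ (Zᵀ *ᵥ c)) +
            (n : ℝ) * lam * vnormSq (Zᵀ *ᵥ c) := part1 c bd.2
      _ ≤ vnormSq (y - T *ᵥ bd.2 - Z *ᵥ bd.1) + (n : ℝ) * lam * vnormSq bd.1 := by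
          rw [hZ]
          have := mul_le_mul_of_nonneg_left hle hnl
          linarith
  · refine le_ciInf fun cd => ?_
    exact (ciInf_le hb2 (Zᵀ *ᵥ cd.1, cd.2)).trans_eq (part1 cd.1 cd.2).symm
end
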